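/- arXiv:1009.1741 — 3 statements merged into one kernel-verified Lean document; each statement's English description precedes it below -/
import Mathlib

section
/- There is a bijection between strict Gelfand-Tsetlin patterns of rank r with fixed top row λ+ρ and admissible states of the six-vertex model on an (r+1) × (λ_r + r + 1) grid with the boundary conditions determined by λ: minus spins on top boundary at columns λ_j + j, plus spins elsewhere on top, plus spins on the bottom boundary and left boundary, and minus spins on the right boundary. -/
/-- The six admissible six-vertex configurations, given as spins
(north, south, west, east), with `true` = `+` and `false` = `-`. -/
def Adm (nb sb wb eb : Bool) : Prop :=
  (nb, sb, wb, eb) = (true, true, true, true) ∨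
  (nb, sb, wb, eb) = (false, true, true, false) ∨
  (nb, sb, wb, eb) = (true, true, false, false) ∨
  (nb, sb, wb, eb) = (false, false, false, false) ∨
  (nb, sb, wb, eb) = (false, false, true, true) ∨
  (nb, sb, wb, eb) = (true, false, false, true)

/-- A strict Gelfand-Tsetlin pattern of rank `r` with top row `λ + ρ`, encoded as a
function `a i j` (rows `0 ≤ i ≤ r`, entries `i ≤ j ≤ r`), normalized to `0` off-domain. -/
def IsGTPattern (r : ℕ) (lam : ℕ → ℕ) (a : ℕ → ℕ → ℕ) : Prop :=
  (∀ i j, ¬(i ≤ j ∧ j ≤ r) → a i j = 0) ∧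
  (∀ j, j ≤ r → a 0 j = lam (r - j) + (r - j)) ∧
  (∀ i j, 1 ≤ i → i ≤ j → j ≤ r → a i j ≤ a (i - 1) (j - 1) ∧ a (i - 1) j ≤ a i j) ∧
  (∀ i j, i ≤ j → j < r → a i (j + 1) < a i j)

/-- An admissible state of the six-vertex model on an `(r+1) × (N+1)` grid with the
boundary conditions determined by `λ` (here `N = λ_r + r`): vertical spins `s.1 i c`
(layers `0 ≤ i ≤ r+1` from top, columns `0 ≤ c ≤ N` labeled from the right), horizontal
spins `s.2 i c` (rows `0 ≤ i ≤ r`, edges `0 ≤ c ≤ N+1` from the right); minus spins on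
the top boundary exactly at the columns `λ_j + j`, plus spins on the bottom boundary,
plus on the left of each row, minus on the right of each row; all vertices admissible.
Off-domain values are normalized to `true`. -/
def IsIceState (r N : ℕ) (lam : ℕ → ℕ) (s : (ℕ → ℕ → Bool) × (ℕ → ℕ → Bool)) : Prop :=
  (∀ i c, ¬(i ≤ r + 1 ∧ c ≤ N) → s.1 i c = true) ∧
  (∀ i c, ¬(i ≤ r ∧ c ≤ N + 1) → s.2 i c = true) ∧
  (∀ c, c ≤ N → (s.1 0 c = false ↔ ∃ j, j ≤ r ∧ c = lam j + j)) ∧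
  (∀ c, c ≤ N → s.1 (r + 1) c = true) ∧
  (∀ i, i ≤ r → s.2 i 0 = false) ∧
  (∀ i, i ≤ r → s.2 i (N + 1) = true) ∧
  (∀ i c, i ≤ r → c ≤ N → Adm (s.1 i c) (s.1 (i + 1) c) (s.2 i (c + 1)) (s.2 i c))

namespace Stmt1Aux
open Finset

lemma adm_iff (n s w e : Bool) :
    Adm n s w e ↔ ((n = s ∧ w = e) ∨ (n ≠ s ∧ w = s ∧ e = n)) := by
  cases n <;> cases s <;> cases w <;> cases e <;> simp [Adm]

/-! ### Forward map -/

def vS (r N : ℕ) (a : ℕ → ℕ → ℕ) (i c : ℕ) : Bool :=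
  if c ≤ N then !decide (∃ j ∈ Finset.Icc i r, a i j = c) else true

def Pw (r : ℕ) (a : ℕ → ℕ → ℕ) (i c : ℕ) : Prop :=
  ∃ j ∈ Finset.Icc i r, a i j < c ∧ (j = i ∨ c ≤ a (i + 1) j)

instance (r : ℕ) (a : ℕ → ℕ → ℕ) (i c : ℕ) : Decidable (Pw r a i c) := by
  unfold Pw; infer_instance

def hS (r N : ℕ) (a : ℕ → ℕ → ℕ) (i c : ℕ) : Bool :=
  if i ≤ r ∧ c ≤ N + 1 then decide (Pw r a i c) else true

def Fmap (r N : ℕ) (a : ℕ → ℕ → ℕ) : (ℕ → ℕ → Bool) × (ℕ → ℕ → Bool) :=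
  (vS r N a, hS r N a)

section IffLemmas
variable {r N : ℕ} {a : ℕ → ℕ → ℕ} {i c : ℕ}

lemma vS_eq_false (hc : c ≤ N) :
    vS r N a i c = false ↔ ∃ j ∈ Finset.Icc i r, a i j = c := by
  simp [vS, hc]

lemma vS_eq_true (hc : c ≤ N) :
    vS r N a i c = true ↔ ¬ ∃ j ∈ Finset.Icc i r, a i j = c := by
  simp [vS, hc]

lemma hS_eq_false (hi : i ≤ r) (hc : c ≤ N + 1) :
    hS r N a i c = false ↔ ¬ Pw r a i c := by
  simp [hS, hi, hc]

lemma hS_eq_true (hi : i ≤ r) (hc : c ≤ N + 1) :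
    hS r N a i c = true ↔ Pw r a i c := by
  simp [hS, hi, hc]

end IffLemmas

section GTfacts

variable {r : ℕ} {lam : ℕ → ℕ} {a : ℕ → ℕ → ℕ}
variable (hGT : IsGTPattern r lam a)
include hGT

lemma gt_anti {i j j' : ℕ} (hij : i ≤ j) (hjj : j < j') (hj'r : j' ≤ r) :
    a i j' < a i j := by
  induction j' with
  | zero => omega
  | succ k ih =>
    rcases Nat.lt_or_ge j k with h | h
    · exact lt_trans (hGT.2.2.2 i k (by omega) (by omega)) (ih (by omega) (by omega))
    · have : j = k := by omega
      subst this
      exact hGT.2.2.2 i j hij (by omega)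

lemma gt_anti_le {i j j' : ℕ} (hij : i ≤ j) (hjj : j ≤ j') (hj'r : j' ≤ r) :
    a i j' ≤ a i j := by
  rcases Nat.eq_or_lt_of_le hjj with h | h
  · subst h; rfl
  · exact le_of_lt (gt_anti hGT hij h hj'r)

lemma gt_le_above {i j : ℕ} (hij : i ≤ j) (hjr : j ≤ r) : a i j ≤ a 0 (j - i) := by
  induction i generalizing j with
  | zero => simp
  | succ k ih =>
    have h1 : a (k + 1) j ≤ a k (j - 1) := by
      have := (hGT.2.2.1 (k + 1) j (by omega) hij hjr).1
      simpa using this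
    have h2 : a k (j - 1) ≤ a 0 (j - 1 - k) := ih (by omega) (by omega)
    have h3 : j - 1 - k = j - (k + 1) := by omega
    rw [h3] at h2
    omega

lemma gt_bound {i j : ℕ} (hij : i ≤ j) (hjr : j ≤ r) : a i j ≤ lam r + r := by
  have h1 := gt_le_above hGT hij hjr
  have h2 : a 0 (j - i) ≤ a 0 0 := gt_anti_le hGT (by omega) (by omega) (by omega)
  have h3 := hGT.2.1 0 (by omega)
  simp at h3
  omega

/-- down-interlacing: `a i j ≤ a (i+1) j` -/
lemma gt_down {i j : ℕ} (hij : i + 1 ≤ j) (hjr : j ≤ r) : a i j ≤ a (i + 1) j := by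
  have := (hGT.2.2.1 (i + 1) j (by omega) hij hjr).2
  simpa using this

/-- up-interlacing: `a (i+1) j ≤ a i (j-1)` -/
lemma gt_up {i j : ℕ} (hij : i + 1 ≤ j) (hjr : j ≤ r) : a (i + 1) j ≤ a i (j - 1) := by
  have := (hGT.2.2.1 (i + 1) j (by omega) hij hjr).1
  simpa using this

lemma gt_L1 {i c : ℕ}
    (hT : ∃ j ∈ Finset.Icc i r, a i j = c)
    (hB : ¬ ∃ j ∈ Finset.Icc (i + 1) r, a (i + 1) j = c) :
    ¬ Pw r a i c ∧ Pw r a i (c + 1) := by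
  obtain ⟨jx, hjx, hax⟩ := hT
  rw [Finset.mem_Icc] at hjx
  constructor
  · rintro ⟨j', hj', hlt, hor⟩
    rw [Finset.mem_Icc] at hj'
    have hgt : jx < j' := by
      by_contra h
      have := gt_anti_le hGT hj'.1 (by omega : j' ≤ jx) hjx.2
      omega
    have hc : c ≤ a (i + 1) j' := by
      rcases hor with h | h
      · omega
      · exact h
    have h4 : a (i + 1) j' ≤ a i (j' - 1) := gt_up hGT (by omega) hj'.2
    have h5 : a i (j' - 1) ≤ a i jx := gt_anti_le hGT hjx.1 (by omega) (by omega)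
    exact hB ⟨j', Finset.mem_Icc.2 ⟨by omega, hj'.2⟩, by omega⟩
  · rcases Nat.eq_or_lt_of_le hjx.1 with h | h
    · subst h
      exact ⟨i, Finset.mem_Icc.2 hjx, by omega, Or.inl rfl⟩
    · have h1 : a i jx ≤ a (i + 1) jx := gt_down hGT (by omega) hjx.2
      have h2 : a (i + 1) jx ≠ c := fun hh =>
        hB ⟨jx, Finset.mem_Icc.2 ⟨by omega, hjx.2⟩, hh⟩
      exact ⟨jx, Finset.mem_Icc.2 hjx, by omega, Or.inr (by omega)⟩

lemma gt_L2 {i c : ℕ}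
    (hT : ¬ ∃ j ∈ Finset.Icc i r, a i j = c)
    (hB : ∃ j ∈ Finset.Icc (i + 1) r, a (i + 1) j = c) :
    Pw r a i c ∧ ¬ Pw r a i (c + 1) := by
  obtain ⟨jy, hjy, hay⟩ := hB
  rw [Finset.mem_Icc] at hjy
  have hxy : a i jy ≤ a (i + 1) jy := gt_down hGT hjy.1 hjy.2
  have hne : a i jy ≠ c := fun hh =>
    hT ⟨jy, Finset.mem_Icc.2 ⟨by omega, hjy.2⟩, hh⟩
  constructor
  · exact ⟨jy, Finset.mem_Icc.2 ⟨by omega, hjy.2⟩, by omega, Or.inr (by omega)⟩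
  · rintro ⟨j', hj', hlt, hor⟩
    rw [Finset.mem_Icc] at hj'
    have hne' : a i j' ≠ c := fun hh =>
      hT ⟨j', Finset.mem_Icc.2 hj', hh⟩
    have hlt' : a i j' < c := by omega
    have hup : c ≤ a i (jy - 1) := by
      have := gt_up hGT hjy.1 hjy.2
      omega
    have hjj : jy ≤ j' := by
      by_contra h
      have := gt_anti_le hGT hj'.1 (by omega : j' ≤ jy - 1) (by omega)
      omega
    rcases hor with h | h
    · omega
    · have := gt_anti_le hGT (by omega : i + 1 ≤ jy) hjj hj'.2
      omega

lemma gt_L3 {i c : ℕ}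
    (hT : ∃ j ∈ Finset.Icc i r, a i j = c)
    (hB : ∃ j ∈ Finset.Icc (i + 1) r, a (i + 1) j = c) :
    (Pw r a i c ↔ Pw r a i (c + 1)) := by
  obtain ⟨jx, hjx, hax⟩ := hT
  obtain ⟨jy, hjy, hay⟩ := hB
  rw [Finset.mem_Icc] at hjx hjy
  have h1 : jx ≤ jy := by
    by_contra h
    have h2 : a i jy ≤ a (i + 1) jy := gt_down hGT hjy.1 hjy.2
    have := gt_anti hGT (by omega : i ≤ jy) (by omega : jy < jx) hjx.2
    omega
  have h2 : jy ≤ jx + 1 := by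
    by_contra h
    have h3 : a (i + 1) jy ≤ a i (jy - 1) := gt_up hGT hjy.1 hjy.2
    have := gt_anti hGT hjx.1 (by omega : jx < jy - 1) (by omega)
    omega
  rcases Nat.eq_or_lt_of_le h1 with hcase | hcase
  · -- jy = jx : both sides false
    subst hcase
    constructor
    · rintro ⟨j', hj', hlt, hor⟩
      rw [Finset.mem_Icc] at hj'
      have hgt : jx < j' := by
        by_contra h
        have := gt_anti_le hGT hj'.1 (by omega : j' ≤ jx) hjx.2
        omega
      have hc : c ≤ a (i + 1) j' := by
        rcases hor with h | h
        · omega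
        · exact h
      have := gt_anti hGT hjy.1 hgt hj'.2
      omega
    · rintro ⟨j', hj', hlt, hor⟩
      rw [Finset.mem_Icc] at hj'
      have hge : jx ≤ j' := by
        by_contra h
        have := gt_anti hGT hj'.1 (by omega : j' < jx) hjx.2
        omega
      have hc : c + 1 ≤ a (i + 1) j' := by
        rcases hor with h | h
        · omega
        · exact h
      have := gt_anti_le hGT hjy.1 hge hj'.2
      omega
  · -- jy = jx + 1 : both sides true
    have hcase' : jy = jx + 1 := by omega
    subst hcase'
    constructor
    · intro _
      rcases Nat.eq_or_lt_of_le hjx.1 with h | h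
      · subst h
        exact ⟨i, Finset.mem_Icc.2 hjx, by omega, Or.inl rfl⟩
      · have hstr : a (i + 1) (jx + 1) < a (i + 1) jx :=
          gt_anti hGT (by omega) (by omega) hjy.2
        exact ⟨jx, Finset.mem_Icc.2 hjx, by omega, Or.inr (by omega)⟩
    · intro _
      have hstr : a i (jx + 1) < a i jx := gt_anti hGT hjx.1 (by omega) hjy.2
      have hxy : a i (jx + 1) ≤ a (i + 1) (jx + 1) := gt_down hGT (by omega) hjy.2
      exact ⟨jx + 1, Finset.mem_Icc.2 ⟨by omega, hjy.2⟩, by omega, Or.inr (by omega)⟩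

omit hGT in
lemma gt_L4 {i c : ℕ}
    (hT : ¬ ∃ j ∈ Finset.Icc i r, a i j = c)
    (hB : ¬ ∃ j ∈ Finset.Icc (i + 1) r, a (i + 1) j = c) :
    (Pw r a i c ↔ Pw r a i (c + 1)) := by
  constructor
  · rintro ⟨j', hj', hlt, hor⟩
    refine ⟨j', hj', by omega, ?_⟩
    by_cases hji : j' = i
    · exact Or.inl hji
    · rw [Finset.mem_Icc] at hj'
      have h1 : c ≤ a (i + 1) j' := by
        rcases hor with h | h
        · omega
        · exact h
      have h2 : a (i + 1) j' ≠ c := fun hh =>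
        hB ⟨j', Finset.mem_Icc.2 ⟨by omega, hj'.2⟩, hh⟩
      exact Or.inr (by omega)
  · rintro ⟨j', hj', hlt, hor⟩
    have h2 : a i j' ≠ c := fun hh => hT ⟨j', hj', hh⟩
    refine ⟨j', hj', by omega, ?_⟩
    rcases hor with h | h
    · exact Or.inl h
    · exact Or.inr (by omega)

theorem forward :
    IsIceState r (lam r + r) lam (Fmap r (lam r + r) a) := by
  set N := lam r + r with hN
  refine ⟨?_, ?_, ?_, ?_, ?_, ?_, ?_⟩
  · intro i c h
    show vS r N a i c = true
    rw [vS]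
    split
    · rename_i hc
      have hi : r + 1 < i := by omega
      simp only [Bool.not_eq_true', decide_eq_false_iff_not]
      rintro ⟨j, hj, -⟩
      rw [Finset.mem_Icc] at hj
      omega
    · rfl
  · intro i c h
    show hS r N a i c = true
    rw [hS, if_neg h]
  · intro c hc
    show vS r N a 0 c = false ↔ _
    have hiff : (vS r N a 0 c = false) ↔ (∃ j ∈ Finset.Icc 0 r, a 0 j = c) := by
      simp [vS, hc]
    rw [hiff]
    constructor
    · rintro ⟨j, hj, hja⟩
      rw [Finset.mem_Icc] at hj
      refine ⟨r - j, by omega, ?_⟩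
      rw [hGT.2.1 j hj.2] at hja
      omega
    · rintro ⟨j, hj, hc'⟩
      refine ⟨r - j, Finset.mem_Icc.2 ⟨by omega, by omega⟩, ?_⟩
      rw [hGT.2.1 (r - j) (by omega)]
      have hrj : r - (r - j) = j := by omega
      rw [hrj]
      omega
  · intro c hc
    show vS r N a (r + 1) c = true
    rw [vS, if_pos hc]
    simp only [Bool.not_eq_true', decide_eq_false_iff_not]
    rintro ⟨j, hj, -⟩
    rw [Finset.mem_Icc] at hj
    omega
  · intro i hi
    show hS r N a i 0 = false
    rw [hS, if_pos ⟨hi, by omega⟩]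
    simp only [decide_eq_false_iff_not]
    rintro ⟨j, hj, hlt, -⟩
    omega
  · intro i hi
    show hS r N a i (N + 1) = true
    rw [hS, if_pos ⟨hi, le_refl _⟩]
    simp only [decide_eq_true_eq]
    have hb := gt_bound hGT (le_refl i) hi
    exact ⟨i, Finset.mem_Icc.2 ⟨le_refl _, hi⟩, by omega, Or.inl rfl⟩
  · intro i c hi hc
    show Adm (vS r N a i c) (vS r N a (i + 1) c) (hS r N a i (c + 1)) (hS r N a i c)
    rw [adm_iff]
    by_cases hT : ∃ j ∈ Finset.Icc i r, a i j = c <;>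
      by_cases hB : ∃ j ∈ Finset.Icc (i + 1) r, a (i + 1) j = c
    · left
      refine ⟨by rw [(vS_eq_false hc).2 hT, (vS_eq_false (a := a) (i := i + 1) hc).2 hB], ?_⟩
      by_cases hP : Pw r a i c
      · rw [(hS_eq_true hi (by omega)).2 hP,
          (hS_eq_true hi (by omega)).2 ((gt_L3 hGT hT hB).1 hP)]
      · rw [(hS_eq_false hi (by omega)).2 hP,
          (hS_eq_false hi (by omega)).2 (fun hq => hP ((gt_L3 hGT hT hB).2 hq))]
    · right
      obtain ⟨h1, h2⟩ := gt_L1 hGT hT hB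
      rw [(vS_eq_false hc).2 hT, (vS_eq_true (a := a) (i := i + 1) hc).2 hB,
        (hS_eq_true hi (by omega)).2 h2, (hS_eq_false hi (by omega)).2 h1]
      exact ⟨by simp, rfl, rfl⟩
    · right
      obtain ⟨h1, h2⟩ := gt_L2 hGT hT hB
      rw [(vS_eq_true hc).2 hT, (vS_eq_false (a := a) (i := i + 1) hc).2 hB,
        (hS_eq_false hi (by omega)).2 h2, (hS_eq_true hi (by omega)).2 h1]
      exact ⟨by simp, rfl, rfl⟩
    · left
      refine ⟨by rw [(vS_eq_true hc).2 hT, (vS_eq_true (a := a) (i := i + 1) hc).2 hB], ?_⟩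
      by_cases hP : Pw r a i c
      · rw [(hS_eq_true hi (by omega)).2 hP,
          (hS_eq_true hi (by omega)).2 ((gt_L4 hT hB).1 hP)]
      · rw [(hS_eq_false hi (by omega)).2 hP,
          (hS_eq_false hi (by omega)).2 (fun hq => hP ((gt_L4 hT hB).2 hq))]

end GTfacts

section Enum

lemma enum_ge {f g : ℕ → ℕ} {lo hi : ℕ}
    (hf : ∀ j j', lo ≤ j → j < j' → j' ≤ hi → f j' < f j)
    (hg : ∀ j j', lo ≤ j → j < j' → j' ≤ hi → g j' < g j)
    (hsub : ∀ c, (∃ j, lo ≤ j ∧ j ≤ hi ∧ g j = c) → (∃ j, lo ≤ j ∧ j ≤ hi ∧ f j = c))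
    {j : ℕ} (hj : lo ≤ j) (hj2 : j ≤ hi)
    (hih : ∀ k, lo ≤ k → k < j → f k = g k) : g j ≤ f j := by
  by_contra hcon
  obtain ⟨k, hk1, hk2, hk3⟩ := hsub (g j) ⟨j, hj, hj2, rfl⟩
  have hkj : k < j := by
    by_contra h
    rcases Nat.eq_or_lt_of_le (Nat.le_of_not_lt h) with h' | h'
    · subst h'; omega
    · have := hf j k hj h' hk2
      omega
  have h1 := hih k hk1 hkj
  have h2 := hg k j hk1 hkj hj2
  omega

lemma enum_eq {f g : ℕ → ℕ} {lo hi : ℕ}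
    (hf : ∀ j j', lo ≤ j → j < j' → j' ≤ hi → f j' < f j)
    (hg : ∀ j j', lo ≤ j → j < j' → j' ≤ hi → g j' < g j)
    (hmem : ∀ c, (∃ j, lo ≤ j ∧ j ≤ hi ∧ f j = c) ↔ (∃ j, lo ≤ j ∧ j ≤ hi ∧ g j = c)) :
    ∀ j, lo ≤ j → j ≤ hi → f j = g j := by
  intro j
  induction j using Nat.strong_induction_on with
  | _ j ih =>
    intro hj hj2
    have h1 := enum_ge hf hg (fun c hc => (hmem c).2 hc) hj hj2
      (fun k hk1 hk2 => ih k hk2 hk1 (by omega))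
    have h2 := enum_ge hg hf (fun c hc => (hmem c).1 hc) hj hj2
      (fun k hk1 hk2 => (ih k hk2 hk1 (by omega)).symm)
    omega

end Enum

theorem Fmap_inj {r : ℕ} {lam : ℕ → ℕ} {a a' : ℕ → ℕ → ℕ}
    (h : IsGTPattern r lam a) (h' : IsGTPattern r lam a')
    (heq : Fmap r (lam r + r) a = Fmap r (lam r + r) a') : a = a' := by
  set N := lam r + r with hN
  funext i j
  by_cases hd : i ≤ j ∧ j ≤ r
  · refine enum_eq (f := a i) (g := a' i) (lo := i) (hi := r)
      (fun k k' h1 h2 h3 => gt_anti h h1 h2 h3)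
      (fun k k' h1 h2 h3 => gt_anti h' h1 h2 h3) ?_ j hd.1 hd.2
    intro c
    by_cases hc : c ≤ N
    · have hv := congrFun (congrFun (congrArg Prod.fst heq) i) c
      rw [show (Fmap r N a).1 = vS r N a from rfl,
        show (Fmap r N a').1 = vS r N a' from rfl, vS, vS, if_pos hc, if_pos hc] at hv
      have hv' : (∃ k ∈ Finset.Icc i r, a i k = c) ↔ (∃ k ∈ Finset.Icc i r, a' i k = c) := by
        rw [← decide_eq_decide]
        exact Bool.not_inj hv
      simp only [Finset.mem_Icc] at hv'
      constructor
      · rintro ⟨k, h1, h2, h3⟩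
        obtain ⟨k', hk'⟩ := hv'.1 ⟨k, ⟨h1, h2⟩, h3⟩
        exact ⟨k', hk'.1.1, hk'.1.2, hk'.2⟩
      · rintro ⟨k, h1, h2, h3⟩
        obtain ⟨k', hk'⟩ := hv'.2 ⟨k, ⟨h1, h2⟩, h3⟩
        exact ⟨k', hk'.1.1, hk'.1.2, hk'.2⟩
    · constructor
      · rintro ⟨k, h1, h2, h3⟩
        have := gt_bound h h1 h2
        omega
      · rintro ⟨k, h1, h2, h3⟩
        have := gt_bound h' h1 h2
        omega
  · rw [h.1 i j hd, h'.1 i j hd]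

/-! ### Reverse direction -/

section Reverse

variable {r N : ℕ} {lam : ℕ → ℕ} {s : (ℕ → ℕ → Bool) × (ℕ → ℕ → Bool)}

/-- columns with minus vertical spin between layers -/
def Sset (N : ℕ) (s : (ℕ → ℕ → Bool) × (ℕ → ℕ → Bool)) (i : ℕ) : Finset ℕ :=
  (Finset.range (N + 1)).filter (fun c => s.1 i c = false)

/-- number of minus columns to the right of edge `c` -/
def Tct (s : (ℕ → ℕ → Bool) × (ℕ → ℕ → Bool)) (i c : ℕ) : ℕ :=
  ((Finset.range c).filter (fun c' => s.1 i c' = false)).card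

lemma Tct_step (i c : ℕ) :
    Tct s i (c + 1) = Tct s i c + (if s.1 i c = false then 1 else 0) := by
  unfold Tct
  rw [Finset.range_add_one, Finset.filter_insert]
  split_ifs with h
  · rw [Finset.card_insert_of_notMem (fun hmem => by
      have := Finset.mem_of_mem_filter c hmem
      simp at this)]
  · rfl

variable (hs : IsIceState r N lam s)
include hs

lemma ice_inv {i : ℕ} (hi : i ≤ r) :
    ∀ c, c ≤ N + 1 → Tct s i c = Tct s (i + 1) c + (if s.2 i c = true then 1 else 0) := by
  intro c
  induction c with
  | zero =>
    intro _
    have h0 := hs.2.2.2.2.1 i hi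
    simp [Tct, h0]
  | succ c ih =>
    intro hc
    have hadm := hs.2.2.2.2.2.2 i c hi (by omega)
    rw [adm_iff] at hadm
    rw [Tct_step, Tct_step, ih (by omega)]
    cases h1 : s.1 i c <;> cases h2 : s.1 (i + 1) c <;> cases h3 : s.2 i c <;>
      cases h4 : s.2 i (c + 1) <;> simp_all <;> omega

lemma card_Sset_succ {i : ℕ} (hi : i ≤ r) :
    (Sset N s i).card = (Sset N s (i + 1)).card + 1 := by
  have h1 := ice_inv hs hi (N + 1) (le_refl _)
  have h2 := hs.2.2.2.2.2.1 i hi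
  rw [h2] at h1
  simpa [Sset, Tct, Finset.range_add_one] using h1

lemma card_Sset_bot : (Sset N s (r + 1)).card = 0 := by
  rw [Finset.card_eq_zero, Sset, Finset.filter_eq_empty_iff]
  intro c hc
  rw [Finset.mem_range] at hc
  rw [hs.2.2.2.1 c (by omega)]
  simp

lemma card_Sset {i : ℕ} (hi : i ≤ r + 1) : (Sset N s i).card = r + 1 - i := by
  have key : ∀ k, k ≤ r + 1 → (Sset N s (r + 1 - k)).card = k := by
    intro k
    induction k with
    | zero => intro _; simpa using card_Sset_bot hs
    | succ k ih =>
      intro hk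
      have hik : r + 1 - (k + 1) ≤ r := by omega
      have := card_Sset_succ hs hik
      rw [show r + 1 - (k + 1) + 1 = r + 1 - k by omega] at this
      rw [this, ih (by omega)]
  have := key (r + 1 - i) (by omega)
  rw [show r + 1 - (r + 1 - i) = i by omega] at this
  rw [this]

omit hs

/-- the Gelfand-Tsetlin entries extracted from a state -/
def ent (r N : ℕ) (s : (ℕ → ℕ → Bool) × (ℕ → ℕ → Bool)) (i j : ℕ) : ℕ :=
  if i ≤ j ∧ j ≤ r then ((Sset N s i).sort (· ≤ ·)).getD (r - j) 0 else 0

section EntFacts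

variable {i j j' c : ℕ}
variable (hcard : (Sset N s i).card = r + 1 - i)
include hcard

lemma sort_len : ((Sset N s i).sort (· ≤ ·)).length = r + 1 - i := by
  rw [Finset.length_sort, hcard]

lemma ent_mem (hij : i ≤ j) (hjr : j ≤ r) : ent r N s i j ∈ Sset N s i := by
  rw [ent, if_pos ⟨hij, hjr⟩]
  have hlt : r - j < ((Sset N s i).sort (· ≤ ·)).length := by
    rw [sort_len hcard]; omega
  rw [List.getD_eq_getElem _ _ hlt]
  exact (Finset.mem_sort _).1 (List.getElem_mem hlt)

lemma ent_lt (hij : i ≤ j) (hjj : j < j') (hj'r : j' ≤ r) :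
    ent r N s i j' < ent r N s i j := by
  rw [ent, if_pos ⟨by omega, hj'r⟩, ent, if_pos ⟨hij, by omega⟩]
  have hlt1 : r - j' < ((Sset N s i).sort (· ≤ ·)).length := by
    rw [sort_len hcard]; omega
  have hlt2 : r - j < ((Sset N s i).sort (· ≤ ·)).length := by
    rw [sort_len hcard]; omega
  rw [List.getD_eq_getElem _ _ hlt1, List.getD_eq_getElem _ _ hlt2]
  exact List.pairwise_iff_getElem.1 ((Finset.sortedLT_sort (Sset N s i)).pairwise) _ _ hlt1 hlt2 (by omega)

lemma ent_le (hij : i ≤ j) (hjj : j ≤ j') (hj'r : j' ≤ r) :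
    ent r N s i j' ≤ ent r N s i j := by
  rcases Nat.eq_or_lt_of_le hjj with h | h
  · subst h; rfl
  · exact le_of_lt (ent_lt hcard hij h hj'r)

lemma ent_surj (hir : i ≤ r + 1) (hc : c ∈ Sset N s i) :
    ∃ j, i ≤ j ∧ j ≤ r ∧ ent r N s i j = c := by
  have hmem : c ∈ (Sset N s i).sort (· ≤ ·) := (Finset.mem_sort _).2 hc
  obtain ⟨k, hk, hkc⟩ := List.mem_iff_getElem.1 hmem
  have hk' : k < r + 1 - i := by rw [sort_len hcard] at hk; exact hk
  refine ⟨r - k, by omega, by omega, ?_⟩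
  rw [ent, if_pos ⟨by omega, by omega⟩, show r - (r - k) = k by omega,
    List.getD_eq_getElem _ _ hk]
  exact hkc

lemma ent_rank (hir : i ≤ r + 1) :
    ∀ d j, r - j = d → i ≤ j → j ≤ r →
      ((Sset N s i).filter (fun x => x < ent r N s i j)).card = r - j := by
  intro d
  induction d with
  | zero =>
    intro j hj hij hjr
    rw [show r - j = 0 from by omega, Finset.card_eq_zero, Finset.filter_eq_empty_iff]
    intro x hx
    obtain ⟨j', h1, h2, h3⟩ := ent_surj hcard hir hx
    subst h3
    simp only [not_lt]
    exact ent_le hcard h1 (by omega) hjr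
  | succ d ihd =>
    intro j hj hij hjr
    have hjlt : j < r := by omega
    have hstep : (Sset N s i).filter (fun x => x < ent r N s i j)
        = insert (ent r N s i (j + 1))
            ((Sset N s i).filter (fun x => x < ent r N s i (j + 1))) := by
      ext x
      simp only [Finset.mem_insert, Finset.mem_filter]
      constructor
      · rintro ⟨hxS, hxlt⟩
        obtain ⟨j', h1, h2, h3⟩ := ent_surj hcard hir hxS
        subst h3
        have hj'j : j < j' := by
          by_contra h
          have := ent_le hcard h1 (by omega : j' ≤ j) hjr
          omega
        have hle : ent r N s i j' ≤ ent r N s i (j + 1) :=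
          ent_le hcard (by omega) (by omega) h2
        rcases Nat.eq_or_lt_of_le hle with h | h
        · exact Or.inl h
        · exact Or.inr ⟨hxS, h⟩
      · rintro (h | ⟨hxS, hxlt⟩)
        · subst h
          exact ⟨ent_mem hcard (by omega) (by omega),
            ent_lt hcard hij (by omega) (by omega)⟩
        · exact ⟨hxS, lt_trans hxlt (ent_lt hcard hij (by omega) (by omega))⟩
    rw [hstep, Finset.card_insert_of_notMem (by simp),
      ihd (j + 1) (by omega) (by omega) (by omega)]
    omega

lemma ent_rank' (hir : i ≤ r + 1) (hij : i ≤ j) (hjr : j ≤ r) :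
    ((Sset N s i).filter (fun x => x < ent r N s i j)).card = r - j :=
  ent_rank hcard hir (r - j) j rfl hij hjr

end EntFacts

lemma mem_Sset_le {i c : ℕ} (hc : c ∈ Sset N s i) : c ≤ N := by
  have := Finset.mem_of_mem_filter c hc
  rw [Finset.mem_range] at this
  omega

lemma mem_Sset_iff {i c : ℕ} : c ∈ Sset N s i ↔ (c ≤ N ∧ s.1 i c = false) := by
  simp only [Sset, Finset.mem_filter, Finset.mem_range]
  constructor
  · rintro ⟨h1, h2⟩
    exact ⟨by omega, h2⟩
  · rintro ⟨h1, h2⟩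
    exact ⟨by omega, h2⟩

lemma Tct_eq_filter {i c : ℕ} (hc : c ≤ N + 1) :
    Tct s i c = ((Sset N s i).filter (fun x => x < c)).card := by
  unfold Tct Sset
  rw [Finset.filter_filter]
  congr 1
  ext x
  simp only [Finset.mem_filter, Finset.mem_range]
  constructor
  · rintro ⟨h1, h2⟩
    exact ⟨by omega, h2, h1⟩
  · rintro ⟨h1, h2, h3⟩
    exact ⟨h3, h2⟩

include hs

lemma ent_down {i j : ℕ} (hi1 : i + 1 ≤ j) (hjr : j ≤ r) :
    ent r N s i j ≤ ent r N s (i + 1) j := by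
  have hir : i ≤ r := by omega
  have hcard0 : (Sset N s i).card = r + 1 - i := card_Sset hs (by omega)
  have hcard1 : (Sset N s (i + 1)).card = r + 1 - (i + 1) := card_Sset hs (by omega)
  set c := ent r N s (i + 1) j with hcdef
  have hcS : c ∈ Sset N s (i + 1) := ent_mem hcard1 hi1 hjr
  have hcN : c ≤ N := mem_Sset_le hcS
  have hrank : ((Sset N s (i + 1)).filter (fun x => x < c)).card = r - j :=
    ent_rank' hcard1 (by omega) hi1 hjr
  have hrank1 : ((Sset N s (i + 1)).filter (fun x => x < c + 1)).card = r - j + 1 := by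
    have hins : (Sset N s (i + 1)).filter (fun x => x < c + 1)
        = insert c ((Sset N s (i + 1)).filter (fun x => x < c)) := by
      ext x
      simp only [Finset.mem_insert, Finset.mem_filter]
      constructor
      · rintro ⟨h1, h2⟩
        rcases Nat.lt_or_ge x c with h | h
        · exact Or.inr ⟨h1, h⟩
        · exact Or.inl (by omega)
      · rintro (h | ⟨h1, h2⟩)
        · subst h; exact ⟨hcS, by omega⟩
        · exact ⟨h1, by omega⟩
    rw [hins, Finset.card_insert_of_notMem (by simp), hrank]
  have hge : Tct s (i + 1) (c + 1) ≤ Tct s i (c + 1) := by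
    rw [ice_inv hs hir (c + 1) (by omega)]
    exact Nat.le_add_right _ _
  rw [Tct_eq_filter (N := N) (i := i + 1) (c := c + 1) (by omega),
    Tct_eq_filter (N := N) (i := i) (c := c + 1) (by omega)] at hge
  by_contra hcon
  push_neg at hcon
  have hsub : (Sset N s i).filter (fun x => x < c + 1)
      ⊆ (Finset.Icc (j + 1) r).image (fun k => ent r N s i k) := by
    intro x hx
    rw [Finset.mem_filter] at hx
    obtain ⟨j', h1, h2, h3⟩ := ent_surj hcard0 (by omega) hx.1
    have hj' : j < j' := by
      by_contra h
      have := ent_le hcard0 h1 (by omega : j' ≤ j) hjr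
      omega
    rw [Finset.mem_image]
    exact ⟨j', Finset.mem_Icc.2 ⟨by omega, h2⟩, h3⟩
  have hle := Finset.card_le_card hsub
  have himg := Finset.card_image_le (s := Finset.Icc (j + 1) r)
    (f := fun k => ent r N s i k)
  rw [Nat.card_Icc] at himg
  omega

lemma ent_up {i j : ℕ} (hi1 : i + 1 ≤ j) (hjr : j ≤ r) :
    ent r N s (i + 1) j ≤ ent r N s i (j - 1) := by
  have hir : i ≤ r := by omega
  have hcard0 : (Sset N s i).card = r + 1 - i := card_Sset hs (by omega)
  have hcard1 : (Sset N s (i + 1)).card = r + 1 - (i + 1) := card_Sset hs (by omega)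
  set c := ent r N s (i + 1) j with hcdef
  have hcS : c ∈ Sset N s (i + 1) := ent_mem hcard1 hi1 hjr
  have hcN : c ≤ N := mem_Sset_le hcS
  have hrank : ((Sset N s (i + 1)).filter (fun x => x < c)).card = r - j :=
    ent_rank' hcard1 (by omega) hi1 hjr
  have hle2 : Tct s i c ≤ Tct s (i + 1) c + 1 := by
    rw [ice_inv hs hir c (by omega)]
    split <;> omega
  rw [Tct_eq_filter (N := N) (i := i) (c := c) (by omega),
    Tct_eq_filter (N := N) (i := i + 1) (c := c) (by omega)] at hle2
  by_contra hcon
  push_neg at hcon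
  have hsub : (Finset.Icc (j - 1) r).image (fun k => ent r N s i k)
      ⊆ (Sset N s i).filter (fun x => x < c) := by
    intro x hx
    rw [Finset.mem_image] at hx
    obtain ⟨k, hk, hkx⟩ := hx
    rw [Finset.mem_Icc] at hk
    have hxle : x ≤ ent r N s i (j - 1) := by
      rw [← hkx]
      exact ent_le hcard0 (by omega) hk.1 hk.2
    rw [Finset.mem_filter]
    refine ⟨?_, by omega⟩
    rw [← hkx]
    exact ent_mem hcard0 (by omega) hk.2
  have hinj : Set.InjOn (fun k => ent r N s i k) (Finset.Icc (j - 1) r) := by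
    intro u hu v hv huv
    rw [Finset.coe_Icc, Set.mem_Icc] at hu hv
    by_contra hne
    rcases Nat.lt_or_ge u v with h | h
    · have := ent_lt hcard0 (by omega : i ≤ u) h hv.2
      simp only at huv
      omega
    · have := ent_lt hcard0 (by omega : i ≤ v) (by omega : v < u) hu.2
      simp only at huv
      omega
  have hcimg := Finset.card_image_of_injOn hinj
  have hle := Finset.card_le_card hsub
  rw [hcimg, Nat.card_Icc] at hle
  omega

omit hs

lemma lam_mono (hdom : ∀ j, 1 ≤ j → j ≤ r → lam (j - 1) ≤ lam j) :
    ∀ k k', k ≤ k' → k' ≤ r → lam k ≤ lam k' := by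
  intro k k' hkk
  induction k' with
  | zero =>
    intro _
    have : k = 0 := by omega
    subst this
    exact le_refl _
  | succ m ih =>
    intro hmr
    rcases Nat.eq_or_lt_of_le hkk with h | h
    · subst h; exact le_refl _
    · have h1 : lam k ≤ lam m := ih (by omega) (by omega)
      have h2 := hdom (m + 1) (by omega) hmr
      simp only [Nat.add_sub_cancel] at h2
      omega

include hs

lemma ent_top (hN : N = lam r + r)
    (hdom : ∀ j, 1 ≤ j → j ≤ r → lam (j - 1) ≤ lam j) :
    ∀ j, j ≤ r → ent r N s 0 j = lam (r - j) + (r - j) := by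
  have hcard0 : (Sset N s 0).card = r + 1 - 0 := card_Sset hs (by omega)
  intro j hjr
  refine enum_eq (f := fun j => ent r N s 0 j) (g := fun j => lam (r - j) + (r - j))
    (lo := 0) (hi := r)
    (fun k k' h1 h2 h3 => ent_lt hcard0 (by omega) h2 h3)
    (fun k k' h1 h2 h3 => by
      show lam (r - k') + (r - k') < lam (r - k) + (r - k)
      have := lam_mono hdom (r - k') (r - k) (by omega) (by omega)
      omega) ?_ j (by omega) hjr
  intro c
  constructor
  · rintro ⟨k, h1, h2, h3⟩
    have hcS : c ∈ Sset N s 0 := h3 ▸ ent_mem hcard0 (by omega) h2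
    obtain ⟨hcN, hcv⟩ := mem_Sset_iff.1 hcS
    obtain ⟨j', hj'r, hc'⟩ := (hs.2.2.1 c (by omega)).1 hcv
    refine ⟨r - j', by omega, by omega, ?_⟩
    show lam (r - (r - j')) + (r - (r - j')) = c
    rw [show r - (r - j') = j' from by omega]
    omega
  · rintro ⟨k, h1, h2, h3⟩
    have hcval : c = lam (r - k) + (r - k) := h3.symm
    have hcN : c ≤ N := by
      have := lam_mono hdom (r - k) r (by omega) (by omega)
      omega
    have hcv : s.1 0 c = false :=
      (hs.2.2.1 c (by omega)).2 ⟨r - k, by omega, hcval⟩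
    obtain ⟨j', hj1, hj2, hj3⟩ := ent_surj hcard0 (by omega) (mem_Sset_iff.2 ⟨hcN, hcv⟩)
    exact ⟨j', hj1, hj2, hj3⟩

lemma isGT_of (hN : N = lam r + r)
    (hdom : ∀ j, 1 ≤ j → j ≤ r → lam (j - 1) ≤ lam j) :
    IsGTPattern r lam (ent r N s) := by
  refine ⟨?_, ?_, ?_, ?_⟩
  · intro i j hd
    rw [ent, if_neg hd]
  · intro j hjr
    exact ent_top hs hN hdom j hjr
  · intro i j h1 hij hjr
    obtain ⟨i0, rfl⟩ : ∃ i0, i = i0 + 1 := ⟨i - 1, by omega⟩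
    refine ⟨?_, ?_⟩
    · exact ent_up hs hij hjr
    · exact ent_down hs hij hjr
  · intro i j hij hjr
    exact ent_lt (card_Sset hs (by omega)) hij (by omega) (by omega)

lemma FG_fst : vS r N (ent r N s) = s.1 := by
  funext i c
  by_cases hc : c ≤ N
  · by_cases hi : i ≤ r
    · have hcard := card_Sset hs (by omega : i ≤ r + 1)
      cases hv : s.1 i c
      · have hcS : c ∈ Sset N s i := mem_Sset_iff.2 ⟨hc, hv⟩
        obtain ⟨j, h1, h2, h3⟩ := ent_surj hcard (by omega) hcS
        exact (vS_eq_false hc).2 ⟨j, Finset.mem_Icc.2 ⟨h1, h2⟩, h3⟩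
      · apply (vS_eq_true hc).2
        rintro ⟨j, hj, hje⟩
        rw [Finset.mem_Icc] at hj
        have hmem := mem_Sset_iff.1 (hje ▸ ent_mem hcard hj.1 hj.2)
        rw [hv] at hmem
        exact absurd hmem.2 (by simp)
    · have hvt : vS r N (ent r N s) i c = true := (vS_eq_true hc).2 (by
        rintro ⟨j, hj, -⟩
        rw [Finset.mem_Icc] at hj
        omega)
      rw [hvt]
      by_cases hi1 : i = r + 1
      · subst hi1
        exact (hs.2.2.2.1 c hc).symm
      · exact (hs.1 i c (by omega)).symm
  · rw [show vS r N (ent r N s) i c = true from by rw [vS, if_neg hc]]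
    exact (hs.1 i c (fun h => hc h.2)).symm

omit hs

lemma snd_uniq {s' : (ℕ → ℕ → Bool) × (ℕ → ℕ → Bool)} (hs : IsIceState r N lam s)
    (hs' : IsIceState r N lam s') (h1 : s.1 = s'.1) : s.2 = s'.2 := by
  funext i c
  by_cases hd : i ≤ r ∧ c ≤ N + 1
  · suffices h : ∀ c, c ≤ N + 1 → s.2 i c = s'.2 i c from h c hd.2
    intro c
    induction c with
    | zero =>
      intro _
      rw [hs.2.2.2.2.1 i hd.1, hs'.2.2.2.2.1 i hd.1]
    | succ c ih =>
      intro hc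
      have e1 := ih (by omega)
      have ha := hs.2.2.2.2.2.2 i c hd.1 (by omega)
      have ha' := hs'.2.2.2.2.2.2 i c hd.1 (by omega)
      rw [adm_iff] at ha ha'
      rw [← h1] at ha'
      rcases ha with ⟨hn, hwe⟩ | ⟨hn, hw, he⟩ <;>
        rcases ha' with ⟨hn', hwe'⟩ | ⟨hn', hw', he'⟩
      · rw [hwe, hwe', e1]
      · exact absurd hn hn'
      · exact absurd hn' hn
      · rw [hw, hw']
  · rw [hs.2.1 i c hd, hs'.2.1 i c hd]

end Reverse

end Stmt1Aux


/-- There is a bijection between strict Gelfand-Tsetlin patterns of rank `r`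
with fixed top row `λ + ρ` and admissible states of the six-vertex model on the
`(r+1) × (λ_r + r + 1)` grid with the boundary conditions determined by `λ`. -/
theorem stmt_1 (r : ℕ) (lam : ℕ → ℕ) (hlam0 : lam 0 = 0)
    (hdom : ∀ j, 1 ≤ j → j ≤ r → lam (j - 1) ≤ lam j) :
    Nonempty ({a : ℕ → ℕ → ℕ // IsGTPattern r lam a} ≃
      {s : (ℕ → ℕ → Bool) × (ℕ → ℕ → Bool) // IsIceState r (lam r + r) lam s}) := by
  refine ⟨Equiv.ofBijective
    (fun p => ⟨Stmt1Aux.Fmap r (lam r + r) p.1, Stmt1Aux.forward p.2⟩) ⟨?_, ?_⟩⟩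
  · intro p q h
    exact Subtype.ext (Stmt1Aux.Fmap_inj p.2 q.2 (congrArg Subtype.val h))
  · rintro ⟨s, hs⟩
    have hGT := Stmt1Aux.isGT_of hs rfl hdom
    refine ⟨⟨Stmt1Aux.ent r (lam r + r) s, hGT⟩, Subtype.ext ?_⟩
    have h1 : (Stmt1Aux.Fmap r (lam r + r) (Stmt1Aux.ent r (lam r + r) s)).1 = s.1 :=
      Stmt1Aux.FG_fst hs
    have h2 := Stmt1Aux.snd_uniq (Stmt1Aux.forward hGT) hs h1
    exact Prod.ext h1 h2
end

section
/- Given a strict Gelfand-Tsetlin pattern with a_{i,j} > a_{i-1,j}, in the corresponding ice state every horizontal spin in row i strictly between column a_{i,j} and column a_{i-1,j} is +. -/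
lemma filter_lt_succ_card_eq (s : Finset ℕ) (f : ℕ → ℕ) (c : ℕ)
    (h : ¬ ∃ k ∈ s, f k = c) :
    (s.filter (fun k => f k < c + 1)).card = (s.filter (fun k => f k < c)).card := by
  congr 1
  apply Finset.filter_congr
  intro k hk
  have : f k ≠ c := fun h' => h ⟨k, hk, h'⟩
  constructor <;> intro <;> omega

lemma filter_lt_succ_card_add (s : Finset ℕ) (f : ℕ → ℕ) (c : ℕ)
    (hinj : ∀ x ∈ s, ∀ y ∈ s, f x = f y → x = y)
    (h : ∃ k ∈ s, f k = c) :
    (s.filter (fun k => f k < c + 1)).card = (s.filter (fun k => f k < c)).card + 1 := by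
  obtain ⟨k0, hk0s, hk0⟩ := h
  have heq : s.filter (fun k => f k < c + 1) = insert k0 (s.filter (fun k => f k < c)) := by
    ext x
    simp only [Finset.mem_filter, Finset.mem_insert]
    constructor
    · rintro ⟨hxs, hx⟩
      rcases Nat.lt_succ_iff_lt_or_eq.mp hx with h' | h'
      · exact Or.inr ⟨hxs, h'⟩
      · exact Or.inl (hinj x hxs k0 hk0s (h'.trans hk0.symm))
    · rintro (rfl | ⟨hxs, hx⟩)
      · exact ⟨hk0s, by omega⟩
      · exact ⟨hxs, by omega⟩
  rw [heq, Finset.card_insert_of_notMem]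
  simp only [Finset.mem_filter, not_and]
  intro _
  omega

/-- Given a strict Gelfand-Tsetlin pattern with `a_{i,j} > a_{i-1,j}`, in the
corresponding ice state every horizontal spin in (the ice row corresponding to GT row) `i`
strictly between column `a_{i,j}` and column `a_{i-1,j}` is `+`.  Here `north`/`south` are
the vertical spins above/below the ice row carrying GT rows `i-1` and `i` (minus exactly
at columns that are entries of the corresponding pattern rows), `H c` is the horizontal
edge immediately east of the vertex in column `c` (columns labeled right to left), and
`H 0 = -` is the right boundary. -/
theorem stmt_3 (r N : ℕ) (a : ℕ → ℕ → ℕ)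
    (hinter : ∀ i j, 1 ≤ i → i ≤ j → j ≤ r → a i j ≤ a (i - 1) (j - 1) ∧ a (i - 1) j ≤ a i j)
    (hstrict : ∀ i j, i ≤ j → j < r → a i (j + 1) < a i j)
    (hbound : ∀ i j, i ≤ j → j ≤ r → a i j ≤ N)
    (i : ℕ) (hi : 1 ≤ i) (hir : i ≤ r)
    (north south : ℕ → Bool) (H : ℕ → Bool)
    (hnorth : ∀ c, c ≤ N → (north c = false ↔ ∃ j, i - 1 ≤ j ∧ j ≤ r ∧ c = a (i - 1) j))
    (hsouth : ∀ c, c ≤ N → (south c = false ↔ ∃ j, i ≤ j ∧ j ≤ r ∧ c = a i j))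
    (hH0 : H 0 = false)
    (hadm : ∀ c, c ≤ N → Adm (north c) (south c) (H (c + 1)) (H c))
    (j : ℕ) (hij : i ≤ j) (hjr : j ≤ r) (hgt : a (i - 1) j < a i j) :
    ∀ c, a (i - 1) j < c → c ≤ a i j → H c = true := by
  -- weak row monotonicity
  have hmono : ∀ ℓ k m, ℓ ≤ k → k ≤ m → m ≤ r → a ℓ m ≤ a ℓ k := by
    intro ℓ k m hℓk
    induction m with
    | zero =>
      intro h1 _
      obtain rfl : k = 0 := Nat.le_zero.mp h1
      exact le_rfl
    | succ n ih =>
      intro h1 h2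
      rcases Nat.lt_or_ge k (n + 1) with h | h
      · have hk : k ≤ n := by omega
        have hs := hstrict ℓ n (by omega) (by omega)
        exact le_trans (le_of_lt hs) (ih hk (by omega))
      · obtain rfl : k = n + 1 := by omega
        exact le_rfl
  -- strict row monotonicity
  have hsmono : ∀ ℓ k m, ℓ ≤ k → k < m → m ≤ r → a ℓ m < a ℓ k := by
    intro ℓ k m h1 h2 h3
    calc a ℓ m ≤ a ℓ (k + 1) := hmono ℓ (k + 1) m (by omega) h2 h3
    _ < a ℓ k := hstrict ℓ k h1 (by omega)
  -- injectivity of rows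
  have hinj : ∀ ℓ, ∀ x ∈ Finset.Icc ℓ r, ∀ y ∈ Finset.Icc ℓ r, a ℓ x = a ℓ y → x = y := by
    intro ℓ x hx y hy hxy
    rw [Finset.mem_Icc] at hx hy
    by_contra hne
    rcases Nat.lt_or_ge x y with h | h
    · have := hsmono ℓ x y hx.1 h hy.2
      omega
    · have : y < x := by omega
      have := hsmono ℓ y x hy.1 this hx.2
      omega
  -- the key invariant
  have inv : ∀ c, c ≤ N + 1 →
      (H c = true ∧ ((Finset.Icc (i - 1) r).filter (fun k => a (i - 1) k < c)).card
          = ((Finset.Icc i r).filter (fun k => a i k < c)).card + 1) ∨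
      (H c = false ∧ ((Finset.Icc (i - 1) r).filter (fun k => a (i - 1) k < c)).card
          = ((Finset.Icc i r).filter (fun k => a i k < c)).card) := by
    intro c
    induction c with
    | zero =>
      intro _
      right
      refine ⟨hH0, ?_⟩
      have e1 : ((Finset.Icc (i - 1) r).filter (fun k => a (i - 1) k < 0)) = ∅ :=
        Finset.filter_false_of_mem (fun x _ => by omega)
      have e2 : ((Finset.Icc i r).filter (fun k => a i k < 0)) = ∅ :=
        Finset.filter_false_of_mem (fun x _ => by omega)
      rw [e1, e2]
    | succ c ih =>
      intro hc1
      have hcN : c ≤ N := by omega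
      have hE1 : north c = false ↔ ∃ k ∈ Finset.Icc (i - 1) r, a (i - 1) k = c := by
        rw [hnorth c hcN]
        constructor
        · rintro ⟨k, h1, h2, h3⟩
          exact ⟨k, Finset.mem_Icc.mpr ⟨h1, h2⟩, h3.symm⟩
        · rintro ⟨k, hk, h3⟩
          rw [Finset.mem_Icc] at hk
          exact ⟨k, hk.1, hk.2, h3.symm⟩
      have hE2 : south c = false ↔ ∃ k ∈ Finset.Icc i r, a i k = c := by
        rw [hsouth c hcN]
        constructor
        · rintro ⟨k, h1, h2, h3⟩
          exact ⟨k, Finset.mem_Icc.mpr ⟨h1, h2⟩, h3.symm⟩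
        · rintro ⟨k, hk, h3⟩
          rw [Finset.mem_Icc] at hk
          exact ⟨k, hk.1, hk.2, h3.symm⟩
      have ihc := ih (by omega)
      rcases hadm c hcN with h | h | h | h | h | h <;>
        simp only [Prod.mk.injEq] at h <;>
        obtain ⟨hnb, hsb, hwb, heb⟩ := h
      -- case (T,T,T,T)
      · left
        refine ⟨hwb, ?_⟩
        have hne1 : ¬ ∃ k ∈ Finset.Icc (i - 1) r, a (i - 1) k = c := by
          intro h'
          have := hE1.mpr h'
          rw [hnb] at this
          simp at this
        have hne2 : ¬ ∃ k ∈ Finset.Icc i r, a i k = c := by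
          intro h'
          have := hE2.mpr h'
          rw [hsb] at this
          simp at this
        rw [filter_lt_succ_card_eq _ _ _ hne1, filter_lt_succ_card_eq _ _ _ hne2]
        rcases ihc with ⟨_, hcard⟩ | ⟨hF, _⟩
        · exact hcard
        · rw [heb] at hF
          simp at hF
      -- case (F,T,T,F)
      · left
        refine ⟨hwb, ?_⟩
        have he1 : ∃ k ∈ Finset.Icc (i - 1) r, a (i - 1) k = c := hE1.mp hnb
        have hne2 : ¬ ∃ k ∈ Finset.Icc i r, a i k = c := by
          intro h'
          have := hE2.mpr h'
          rw [hsb] at this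
          simp at this
        rw [filter_lt_succ_card_add _ _ _ (hinj (i - 1)) he1,
          filter_lt_succ_card_eq _ _ _ hne2]
        rcases ihc with ⟨hT, _⟩ | ⟨_, hcard⟩
        · rw [heb] at hT
          simp at hT
        · omega
      -- case (T,T,F,F)
      · right
        refine ⟨hwb, ?_⟩
        have hne1 : ¬ ∃ k ∈ Finset.Icc (i - 1) r, a (i - 1) k = c := by
          intro h'
          have := hE1.mpr h'
          rw [hnb] at this
          simp at this
        have hne2 : ¬ ∃ k ∈ Finset.Icc i r, a i k = c := by
          intro h'
          have := hE2.mpr h'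
          rw [hsb] at this
          simp at this
        rw [filter_lt_succ_card_eq _ _ _ hne1, filter_lt_succ_card_eq _ _ _ hne2]
        rcases ihc with ⟨hT, _⟩ | ⟨_, hcard⟩
        · rw [heb] at hT
          simp at hT
        · exact hcard
      -- case (F,F,F,F)
      · right
        refine ⟨hwb, ?_⟩
        have he1 : ∃ k ∈ Finset.Icc (i - 1) r, a (i - 1) k = c := hE1.mp hnb
        have he2 : ∃ k ∈ Finset.Icc i r, a i k = c := hE2.mp hsb
        rw [filter_lt_succ_card_add _ _ _ (hinj (i - 1)) he1,
          filter_lt_succ_card_add _ _ _ (hinj i) he2]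
        rcases ihc with ⟨hT, _⟩ | ⟨_, hcard⟩
        · rw [heb] at hT
          simp at hT
        · omega
      -- case (F,F,T,T)
      · left
        refine ⟨hwb, ?_⟩
        have he1 : ∃ k ∈ Finset.Icc (i - 1) r, a (i - 1) k = c := hE1.mp hnb
        have he2 : ∃ k ∈ Finset.Icc i r, a i k = c := hE2.mp hsb
        rw [filter_lt_succ_card_add _ _ _ (hinj (i - 1)) he1,
          filter_lt_succ_card_add _ _ _ (hinj i) he2]
        rcases ihc with ⟨_, hcard⟩ | ⟨hF, _⟩
        · omega
        · rw [heb] at hF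
          simp at hF
      -- case (T,F,F,T)
      · right
        refine ⟨hwb, ?_⟩
        have hne1 : ¬ ∃ k ∈ Finset.Icc (i - 1) r, a (i - 1) k = c := by
          intro h'
          have := hE1.mpr h'
          rw [hnb] at this
          simp at this
        have he2 : ∃ k ∈ Finset.Icc i r, a i k = c := hE2.mp hsb
        rw [filter_lt_succ_card_eq _ _ _ hne1,
          filter_lt_succ_card_add _ _ _ (hinj i) he2]
        rcases ihc with ⟨_, hcard⟩ | ⟨hF, _⟩
        · omega
        · rw [heb] at hF
          simp at hF
  -- conclusion
  intro c hc1 hc2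
  have hj1 : 1 ≤ j := le_trans hi hij
  have hcN : c ≤ N := le_trans hc2 (hbound i j hij hjr)
  have e1 : (Finset.Icc (i - 1) r).filter (fun k => a (i - 1) k < c) = Finset.Icc j r := by
    ext k
    simp only [Finset.mem_filter, Finset.mem_Icc]
    constructor
    · rintro ⟨⟨hk1, hk2⟩, hk3⟩
      refine ⟨?_, hk2⟩
      by_contra hkj
      push_neg at hkj
      have h1 : a (i - 1) (j - 1) ≤ a (i - 1) k :=
        hmono (i - 1) k (j - 1) (by omega) (by omega) (by omega)
      have h2 : a i j ≤ a (i - 1) (j - 1) := (hinter i j hi hij hjr).1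
      omega
    · rintro ⟨hk1, hk2⟩
      refine ⟨⟨by omega, hk2⟩, ?_⟩
      have := hmono (i - 1) j k (by omega) hk1 hk2
      omega
  have e2 : (Finset.Icc i r).filter (fun k => a i k < c) = Finset.Icc (j + 1) r := by
    ext k
    simp only [Finset.mem_filter, Finset.mem_Icc]
    constructor
    · rintro ⟨⟨hk1, hk2⟩, hk3⟩
      refine ⟨?_, hk2⟩
      by_contra hkj
      push_neg at hkj
      have := hmono i k j hk1 (by omega) hjr
      omega
    · rintro ⟨hk1, hk2⟩
      refine ⟨⟨by omega, hk2⟩, ?_⟩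
      have h1 := hmono i (j + 1) k (by omega) hk1 hk2
      have h2 : a i (j + 1) ≤ a (i - 1) j := by
        have := (hinter i (j + 1) hi (by omega) (by omega)).1
        simpa using this
      omega
  rcases inv c (by omega) with ⟨hT, _⟩ | ⟨_, hcard⟩
  · exact hT
  · exfalso
    rw [e1, e2, Nat.card_Icc, Nat.card_Icc] at hcard
    omega
end

section
/- For a strict Gelfand-Tsetlin pattern T of rank r corresponding under the bijection to a state S of Gamma ice, the product of Boltzmann weights over all vertices of S equals G^Γ(T) · z_{r+1}^{d_0(T)−d_1(T)} · z_r^{d_1(T)−d_2(T)} ⋯ z_2^{d_{r−1}(T)−d_r(T)} · z_1^{d_r(T)}, where d_i(T) is the sum of the entries in the i-th row of T. -/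
/-- Gamma-ice Boltzmann weight of a vertex with spins (north, south, west, east),
spectral parameter `zi`, charge `ch`, and Gauss sums `g`, `h`:
the six admissible configurations have weights `(1, 1, z_i, z_i, g(a), h(a)z_i)`
as in table (4.1) of the paper; inadmissible configurations get weight `0`. -/
def wtGamma {K : Type*} [CommRing K] (g h : ℕ → K) (zi : K) (ch : ℕ)
    (nb sb wb eb : Bool) : K :=
  match nb, sb, wb, eb with
  | true, true, true, true => 1
  | false, true, true, false => 1
  | true, true, false, false => zi
  | false, false, false, false => zi
  | false, false, true, true => g ch
  | true, false, false, true => h ch * zi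
  | _, _, _, _ => 0

/-- The charge at a Gamma-ice vertex in row `i`, column `c`: the number of `+` horizontal
spins in row `i` to the right of the vertex (horizontal edges `0, …, c`, labeled from the
right boundary edge `0`). -/
def chargeGamma (H : ℕ → ℕ → Bool) (i c : ℕ) : ℕ :=
  ((Finset.range (c + 1)).filter fun c' => H i c' = true).card

/-- `d_i(T)`: the sum of the entries in the `i`-th row of the pattern. -/
def rowSum (r : ℕ) (a : ℕ → ℕ → ℕ) (i : ℕ) : ℕ := ∑ j ∈ Finset.Icc i r, a i j

/-- `b_{i,j} = ∑_{l=j}^r (a_{i,l} − a_{i−1,l})`. -/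
def bGamma (r : ℕ) (a : ℕ → ℕ → ℕ) (i j : ℕ) : ℕ :=
  ∑ l ∈ Finset.Icc j r, (a i l - a (i - 1) l)

/-- `G^Γ(T) = ∏_{i=1}^r ∏_{j=i}^r γ(a_{i,j})` for a strict pattern. -/
def GGamma {K : Type*} [CommRing K] (g h : ℕ → K) (r : ℕ) (a : ℕ → ℕ → ℕ) : K :=
  ∏ i ∈ Finset.Icc 1 r, ∏ j ∈ Finset.Icc i r,
    if a i j = a (i - 1) (j - 1) then g (bGamma r a i j)
    else if a i j = a (i - 1) j then (1 : K)
    else h (bGamma r a i j)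

namespace Stmt4Aux

def pcount (r : ℕ) (a : ℕ → ℕ → ℕ) (i c : ℕ) : ℕ :=
  ((Finset.Icc i r).filter fun j => a i j < c).card

section Aux

variable {K : Type*} [CommRing K] {r N : ℕ} {a : ℕ → ℕ → ℕ} {V H : ℕ → ℕ → Bool}

lemma anti_strict (hstrict : ∀ i j, i ≤ j → j < r → a i (j + 1) < a i j)
    {i j k : ℕ} (hij : i ≤ j) (hjk : j < k) (hkr : k ≤ r) : a i k < a i j := by
  induction k with
  | zero => omega
  | succ k ih =>
    rcases Nat.lt_or_ge j k with hlt | hge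
    · exact lt_trans (hstrict i k (by omega) (by omega)) (ih hlt (by omega))
    · have hjk' : j = k := by omega
      subst hjk'
      exact hstrict i j hij (by omega)

lemma anti_le (hstrict : ∀ i j, i ≤ j → j < r → a i (j + 1) < a i j)
    {i j k : ℕ} (hij : i ≤ j) (hjk : j ≤ k) (hkr : k ≤ r) : a i k ≤ a i j := by
  rcases Nat.lt_or_ge j k with hlt | hge
  · exact le_of_lt (anti_strict hstrict hij hlt hkr)
  · have : j = k := by omega
    subst this; exact le_rfl

lemma bound_le_N (hN : N = a 0 0)
    (hinter : ∀ i j, 1 ≤ i → i ≤ j → j ≤ r → a i j ≤ a (i - 1) (j - 1) ∧ a (i - 1) j ≤ a i j)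
    (hstrict : ∀ i j, i ≤ j → j < r → a i (j + 1) < a i j) :
    ∀ i j, i ≤ j → j ≤ r → a i j ≤ N := by
  intro i
  induction i with
  | zero =>
    intro j _ hjr
    rw [hN]
    exact anti_le hstrict (le_refl 0) (Nat.zero_le j) hjr
  | succ i ih =>
    intro j hij hjr
    have h1 := (hinter (i + 1) j (by omega) hij hjr).1
    simp only [Nat.add_sub_cancel] at h1
    exact le_trans h1 (ih (j - 1) (by omega) (by omega))

lemma squeeze
    (hinter : ∀ i j, 1 ≤ i → i ≤ j → j ≤ r → a i j ≤ a (i - 1) (j - 1) ∧ a (i - 1) j ≤ a i j)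
    (i c : ℕ) :
    pcount r a (i + 1) c ≤ pcount r a i c ∧ pcount r a i c ≤ pcount r a (i + 1) c + 1 := by
  constructor
  · apply Finset.card_le_card
    intro j hj
    simp only [Finset.mem_filter, Finset.mem_Icc] at hj ⊢
    have h2 := (hinter (i + 1) j (by omega) (by omega) (by omega)).2
    simp only [Nat.add_sub_cancel] at h2
    exact ⟨⟨by omega, hj.1.2⟩, lt_of_le_of_lt h2 hj.2⟩
  · have hsub : ((Finset.Icc i r).filter fun j => a i j < c) ⊆
        insert r (((Finset.Icc (i + 1) r).filter fun j => a (i + 1) j < c).image (fun j => j - 1)) := by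
      intro j hj
      simp only [Finset.mem_filter, Finset.mem_Icc] at hj
      rcases eq_or_ne j r with hjr | hjr
      · simp [hjr]
      · apply Finset.mem_insert_of_mem
        apply Finset.mem_image.2
        refine ⟨j + 1, ?_, by omega⟩
        simp only [Finset.mem_filter, Finset.mem_Icc]
        have h1 := (hinter (i + 1) (j + 1) (by omega) (by omega) (by omega)).1
        simp only [Nat.add_sub_cancel] at h1
        exact ⟨⟨by omega, by omega⟩, lt_of_le_of_lt h1 hj.2⟩
    calc pcount r a i c ≤ _ := Finset.card_le_card hsub
      _ ≤ _ + 1 := by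
          rw [add_comm]
          apply le_trans (Finset.card_insert_le _ _)
          exact Nat.add_le_add_right (Finset.card_image_le) 1

lemma pc_succ
    (hstrict : ∀ i j, i ≤ j → j < r → a i (j + 1) < a i j)
    (hV : ∀ i c, i ≤ r → c ≤ N → (V i c = false ↔ ∃ j, i ≤ j ∧ j ≤ r ∧ c = a i j))
    (hVbot : ∀ c, c ≤ N → V (r + 1) c = true)
    {i c : ℕ} (hir : i ≤ r + 1) (hc : c ≤ N) :
    pcount r a i (c + 1) = pcount r a i c + (if V i c = false then 1 else 0) := by
  have hsplit : ((Finset.Icc i r).filter fun j => a i j < c + 1) =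
      ((Finset.Icc i r).filter fun j => a i j < c) ∪ ((Finset.Icc i r).filter fun j => a i j = c) := by
    rw [← Finset.filter_or]
    apply Finset.filter_congr
    intro x _
    constructor
    · intro hx; omega
    · intro hx; omega
  have hdisj : Disjoint ((Finset.Icc i r).filter fun j => a i j < c)
      ((Finset.Icc i r).filter fun j => a i j = c) := by
    apply Finset.disjoint_filter_filter'
    rw [disjoint_iff_inf_le]
    intro x hx
    simp only [Pi.inf_apply, inf_Prop_eq] at hx
    omega
  rcases Nat.lt_or_ge i (r + 1) with hi | hi
  · have hir' : i ≤ r := by omega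
    have hcard : ((Finset.Icc i r).filter fun j => a i j = c).card = if V i c = false then 1 else 0 := by
      by_cases hvc : V i c = false
      · obtain ⟨j, hij, hjr, hcj⟩ := (hV i c hir' hc).1 hvc
        rw [if_pos hvc]
        have : ((Finset.Icc i r).filter fun l => a i l = c) = {j} := by
          ext l
          simp only [Finset.mem_filter, Finset.mem_Icc, Finset.mem_singleton]
          constructor
          · rintro ⟨⟨hil, hlr⟩, hlc⟩
            by_contra hne
            rcases Nat.lt_or_ge l j with h | h
            · have := anti_strict hstrict hil h hjr; omega
            · have := anti_strict hstrict hij (by omega) hlr; omega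
          · rintro rfl; exact ⟨⟨hij, hjr⟩, hcj.symm⟩
        rw [this]; simp
      · rw [if_neg hvc]
        rw [Finset.card_eq_zero, Finset.filter_eq_empty_iff]
        intro l hl
        simp only [Finset.mem_Icc] at hl
        intro hlc
        exact hvc ((hV i c hir' hc).2 ⟨l, hl.1, hl.2, hlc.symm⟩)
    rw [pcount, hsplit, Finset.card_union_of_disjoint hdisj, hcard]
    rfl
  · have : i = r + 1 := by omega
    subst this
    have h1 : Finset.Icc (r + 1) r = ∅ := by
      apply Finset.Icc_eq_empty; omega
    simp [pcount, h1, hVbot c hc]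

lemma Hform
    (hinter : ∀ i j, 1 ≤ i → i ≤ j → j ≤ r → a i j ≤ a (i - 1) (j - 1) ∧ a (i - 1) j ≤ a i j)
    (hstrict : ∀ i j, i ≤ j → j < r → a i (j + 1) < a i j)
    (hV : ∀ i c, i ≤ r → c ≤ N → (V i c = false ↔ ∃ j, i ≤ j ∧ j ≤ r ∧ c = a i j))
    (hVbot : ∀ c, c ≤ N → V (r + 1) c = true)
    (hHr : ∀ i, i ≤ r → H i 0 = false)
    (hadm : ∀ i c, i ≤ r → c ≤ N → Adm (V i c) (V (i + 1) c) (H i (c + 1)) (H i c)) :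
    ∀ i c, i ≤ r → c ≤ N + 1 → H i c = decide (pcount r a (i + 1) c < pcount r a i c) := by
  intro i c hir
  induction c with
  | zero =>
    intro _
    simp [hHr i hir, pcount]
  | succ c ih =>
    intro hc
    have hcN : c ≤ N := by omega
    have hIH := ih (by omega)
    have hp := pc_succ hstrict hV hVbot (show i ≤ r + 1 by omega) hcN
    have hq := pc_succ hstrict hV hVbot (show i + 1 ≤ r + 1 by omega) hcN
    obtain ⟨hs1, hs2⟩ := squeeze hinter i c
    have hIH2 : (pcount r a (i + 1) c < pcount r a i c) ↔ (H i c = true) := by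
      rw [hIH]; simp
    rcases hadm i c hir hcN with h6 | h6 | h6 | h6 | h6 | h6 <;>
    · simp only [Prod.mk.injEq] at h6
      obtain ⟨e1, e2, e3, e4⟩ := h6
      rw [e1] at hp
      rw [e2] at hq
      rw [e4] at hIH2
      simp only [Bool.false_eq_true, iff_false, iff_true] at hIH2
      simp only [Bool.true_eq_false, if_true, if_false, reduceIte] at hp hq
      rw [e3, hp, hq]
      symm
      simp only [decide_eq_true_eq, decide_eq_false_iff_not]
      omega

lemma Htrue_card
    (hinter : ∀ i j, 1 ≤ i → i ≤ j → j ≤ r → a i j ≤ a (i - 1) (j - 1) ∧ a (i - 1) j ≤ a i j)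
    (hstrict : ∀ i j, i ≤ j → j < r → a i (j + 1) < a i j)
    (hV : ∀ i c, i ≤ r → c ≤ N → (V i c = false ↔ ∃ j, i ≤ j ∧ j ≤ r ∧ c = a i j))
    (hVbot : ∀ c, c ≤ N → V (r + 1) c = true)
    (hHr : ∀ i, i ≤ r → H i 0 = false)
    (hadm : ∀ i c, i ≤ r → c ≤ N → Adm (V i c) (V (i + 1) c) (H i (c + 1)) (H i c))
    {i m : ℕ} (hir : i ≤ r) (hm : m ≤ N + 1) :
    ((Finset.range (m + 1)).filter fun c => H i c = true).card =
      ∑ c ∈ Finset.range (m + 1), (pcount r a i c - pcount r a (i + 1) c) := by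
  rw [Finset.card_filter]
  apply Finset.sum_congr rfl
  intro c hc
  simp only [Finset.mem_range] at hc
  have hH := Hform hinter hstrict hV hVbot hHr hadm i c hir (by omega)
  obtain ⟨hs1, hs2⟩ := squeeze hinter i c
  rw [hH]
  by_cases hlt : pcount r a (i + 1) c < pcount r a i c
  · rw [if_pos (by simp [hlt])]; omega
  · rw [if_neg (by simp [hlt])]; omega

lemma sum_pc (i m : ℕ) :
    ∑ c ∈ Finset.range (m + 1), pcount r a i c = ∑ l ∈ Finset.Icc i r, (m - a i l) := by
  have : ∀ c, pcount r a i c = ∑ l ∈ Finset.Icc i r, (if a i l < c then 1 else 0) := by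
    intro c; rw [pcount, Finset.card_filter]
  simp only [this]
  rw [Finset.sum_comm]
  apply Finset.sum_congr rfl
  intro l _
  rw [← Finset.card_filter]
  have : (Finset.range (m + 1)).filter (fun c => a i l < c) = Finset.Ico (a i l + 1) (m + 1) := by
    ext x
    simp only [Finset.mem_filter, Finset.mem_range, Finset.mem_Ico]
    omega
  rw [this, Nat.card_Ico]
  omega

lemma exponent (hN : N = a 0 0)
    (hinter : ∀ i j, 1 ≤ i → i ≤ j → j ≤ r → a i j ≤ a (i - 1) (j - 1) ∧ a (i - 1) j ≤ a i j)
    (hstrict : ∀ i j, i ≤ j → j < r → a i (j + 1) < a i j)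
    (hV : ∀ i c, i ≤ r → c ≤ N → (V i c = false ↔ ∃ j, i ≤ j ∧ j ≤ r ∧ c = a i j))
    (hVbot : ∀ c, c ≤ N → V (r + 1) c = true)
    (hHr : ∀ i, i ≤ r → H i 0 = false)
    (hadm : ∀ i c, i ≤ r → c ≤ N → Adm (V i c) (V (i + 1) c) (H i (c + 1)) (H i c))
    {i : ℕ} (hir : i ≤ r) :
    ((Finset.range (N + 1)).filter fun c => H i (c + 1) = false).card =
      rowSum r a i - rowSum r a (i + 1) := by
  have hbig : ((Finset.range (N + 2)).filter fun c => H i c = true).card =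
      ∑ c ∈ Finset.range (N + 2), (pcount r a i c - pcount r a (i + 1) c) :=
    Htrue_card hinter hstrict hV hVbot hHr hadm hir (le_refl _)
  have htsub : ∑ c ∈ Finset.range (N + 2), (pcount r a i c - pcount r a (i + 1) c) =
      (∑ c ∈ Finset.range (N + 2), pcount r a i c) -
      (∑ c ∈ Finset.range (N + 2), pcount r a (i + 1) c) := by
    apply Finset.sum_tsub_distrib
    intro c _
    exact (squeeze hinter i c).1
  have hsp : ∑ c ∈ Finset.range (N + 2), pcount r a i c
      = ∑ l ∈ Finset.Icc i r, (N + 1 - a i l) := sum_pc i (N + 1)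
  have hsq : ∑ c ∈ Finset.range (N + 2), pcount r a (i + 1) c
      = ∑ l ∈ Finset.Icc (i + 1) r, (N + 1 - a (i + 1) l) := sum_pc (i + 1) (N + 1)
  set A := ∑ l ∈ Finset.Icc i r, (N + 1 - a i l) with hA
  set B := ∑ l ∈ Finset.Icc (i + 1) r, (N + 1 - a (i + 1) l) with hB
  have h1 : A + rowSum r a i = (r + 1 - i) * (N + 1) := by
    rw [hA, rowSum, ← Finset.sum_add_distrib]
    rw [Finset.sum_congr rfl (fun l hl => ?_), Finset.sum_const, Nat.card_Icc, smul_eq_mul]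
    have := bound_le_N hN hinter hstrict i l (Finset.mem_Icc.1 hl).1 (Finset.mem_Icc.1 hl).2
    omega
  have h2 : B + rowSum r a (i + 1) = (r - i) * (N + 1) := by
    rw [hB, rowSum, ← Finset.sum_add_distrib]
    rw [Finset.sum_congr rfl (fun l hl => ?_), Finset.sum_const, Nat.card_Icc, smul_eq_mul,
      show r + 1 - (i + 1) = r - i by omega]
    have := bound_le_N hN hinter hstrict (i + 1) l (Finset.mem_Icc.1 hl).1 (Finset.mem_Icc.1 hl).2
    omega
  have hlin : (r + 1 - i) * (N + 1) = (r - i) * (N + 1) + (N + 1) := by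
    rw [show r + 1 - i = (r - i) + 1 by omega, add_mul, one_mul]
  have hkey : A + rowSum r a i = B + rowSum r a (i + 1) + (N + 1) := by
    rw [h1, hlin, ← h2]
  have hBA : B ≤ A := by
    calc B ≤ ∑ l ∈ Finset.Icc (i + 1) r, (N + 1 - a i l) := by
          apply Finset.sum_le_sum
          intro l hl
          have hx := (hinter (i + 1) l (by omega) (Finset.mem_Icc.1 hl).1 (Finset.mem_Icc.1 hl).2).2
          simp only [Nat.add_sub_cancel] at hx
          omega
      _ ≤ A := by
          apply Finset.sum_le_sum_of_subset
          apply Finset.Icc_subset_Icc_left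
          omega
  have hsplit : ((Finset.range (N + 1)).filter fun c => H i (c + 1) = false).card +
      ((Finset.range (N + 1)).filter fun c => H i (c + 1) = true).card = N + 1 := by
    rw [Finset.card_filter, Finset.card_filter, ← Finset.sum_add_distrib]
    rw [Finset.sum_congr rfl (fun c _ => ?_), Finset.sum_const, smul_eq_mul, mul_one,
      Finset.card_range]
    cases hx : H i (c + 1) <;> simp
  have hshift : ((Finset.range (N + 2)).filter fun c => H i c = true).card =
      ((Finset.range (N + 1)).filter fun c => H i (c + 1) = true).card := by
    rw [Finset.card_filter, Finset.card_filter, Finset.sum_range_succ']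
    simp [hHr i hir]
  have hTB : ((Finset.range (N + 1)).filter fun c => H i (c + 1) = true).card = A - B := by
    rw [← hshift, hbig, htsub, hsp, hsq]
  omega

lemma charge_eq (hN : N = a 0 0)
    (hinter : ∀ i j, 1 ≤ i → i ≤ j → j ≤ r → a i j ≤ a (i - 1) (j - 1) ∧ a (i - 1) j ≤ a i j)
    (hstrict : ∀ i j, i ≤ j → j < r → a i (j + 1) < a i j)
    (hV : ∀ i c, i ≤ r → c ≤ N → (V i c = false ↔ ∃ j, i ≤ j ∧ j ≤ r ∧ c = a i j))
    (hVbot : ∀ c, c ≤ N → V (r + 1) c = true)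
    (hHr : ∀ i, i ≤ r → H i 0 = false)
    (hadm : ∀ i c, i ≤ r → c ≤ N → Adm (V i c) (V (i + 1) c) (H i (c + 1)) (H i c))
    {i j : ℕ} (hij : i + 1 ≤ j) (hjr : j ≤ r) :
    chargeGamma H i (a (i + 1) j) = bGamma r a (i + 1) j := by
  have hcN : a (i + 1) j ≤ N := bound_le_N hN hinter hstrict (i + 1) j hij hjr
  have hTB : ∀ l, j ≤ l → l ≤ r → a i l ≤ a (i + 1) l ∧ a (i + 1) l ≤ a (i + 1) j := by
    intro l hjl hlr
    have h2 := (hinter (i + 1) l (by omega) (by omega) hlr).2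
    simp only [Nat.add_sub_cancel] at h2
    exact ⟨h2, anti_le hstrict (by omega) hjl hlr⟩
  have hTbig : ∀ l, i ≤ l → l < j → a (i + 1) j ≤ a i l := by
    intro l hil hlj
    have h1 := (hinter (i + 1) j (by omega) hij hjr).1
    simp only [Nat.add_sub_cancel] at h1
    exact le_trans h1 (anti_le hstrict hil (by omega) (by omega))
  have hBbig : ∀ l, i + 1 ≤ l → l < j → a (i + 1) j ≤ a (i + 1) l := by
    intro l hil hlj
    exact anti_le hstrict hil (by omega) hjr
  rw [chargeGamma, Htrue_card hinter hstrict hV hVbot hHr hadm (show i ≤ r by omega)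
    (show a (i + 1) j ≤ N + 1 by omega)]
  rw [Finset.sum_tsub_distrib _ (fun x _ => (squeeze hinter i x).1)]
  rw [sum_pc i (a (i + 1) j), sum_pc (i + 1) (a (i + 1) j)]
  have hp : ∑ l ∈ Finset.Icc i r, (a (i + 1) j - a i l)
      = ∑ l ∈ Finset.Icc j r, (a (i + 1) j - a i l) := by
    symm
    apply Finset.sum_subset (Finset.Icc_subset_Icc_left (by omega))
    intro l hl hnl
    simp only [Finset.mem_Icc] at hl hnl
    have := hTbig l hl.1 (by omega)
    omega
  have hq : ∑ l ∈ Finset.Icc (i + 1) r, (a (i + 1) j - a (i + 1) l) =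
      ∑ l ∈ Finset.Icc j r, (a (i + 1) j - a (i + 1) l) := by
    symm
    apply Finset.sum_subset (Finset.Icc_subset_Icc_left (by omega))
    intro l hl hnl
    simp only [Finset.mem_Icc] at hl hnl
    have := hBbig l hl.1 (by omega)
    omega
  rw [hp, hq, bGamma]
  simp only [Nat.add_sub_cancel]
  have hsum : ∑ l ∈ Finset.Icc j r, (a (i + 1) j - a i l) =
      ∑ l ∈ Finset.Icc j r, (a (i + 1) j - a (i + 1) l)
        + ∑ l ∈ Finset.Icc j r, (a (i + 1) l - a i l) := by
    rw [← Finset.sum_add_distrib]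
    apply Finset.sum_congr rfl
    intro l hl
    simp only [Finset.mem_Icc] at hl
    have := hTB l hl.1 hl.2
    omega
  omega

lemma pc_filter_eq {i j : ℕ} (hij : i ≤ j) (hjr : j ≤ r) {c : ℕ}
    (hlow : ∀ l, j + 1 ≤ l → l ≤ r → a i l < c)
    (hhigh : ∀ l, i ≤ l → l ≤ j → c ≤ a i l) :
    pcount r a i c = r - j := by
  have : ((Finset.Icc i r).filter fun l => a i l < c) = Finset.Icc (j + 1) r := by
    ext l
    simp only [Finset.mem_filter, Finset.mem_Icc]
    constructor
    · rintro ⟨⟨hil, hlr⟩, hlc⟩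
      refine ⟨?_, hlr⟩
      by_contra hcon
      exact absurd hlc (not_lt.2 (hhigh l hil (by omega)))
    · rintro ⟨hjl, hlr⟩
      exact ⟨⟨by omega, hlr⟩, hlow l hjl hlr⟩
  rw [pcount, this, Nat.card_Icc]
  omega

lemma pc_filter_eq' {i j : ℕ} (hij : i ≤ j) (hjr : j ≤ r) {c : ℕ}
    (hlow : ∀ l, j ≤ l → l ≤ r → a i l < c)
    (hhigh : ∀ l, i ≤ l → l < j → c ≤ a i l) :
    pcount r a i c = r + 1 - j := by
  have : ((Finset.Icc i r).filter fun l => a i l < c) = Finset.Icc j r := by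
    ext l
    simp only [Finset.mem_filter, Finset.mem_Icc]
    constructor
    · rintro ⟨⟨hil, hlr⟩, hlc⟩
      refine ⟨?_, hlr⟩
      by_contra hcon
      exact absurd hlc (not_lt.2 (hhigh l hil (by omega)))
    · rintro ⟨hjl, hlr⟩
      exact ⟨⟨by omega, hlr⟩, hlow l hjl hlr⟩
  rw [pcount, this, Nat.card_Icc]

lemma uprod (g h : ℕ → K) (hN : N = a 0 0)
    (hinter : ∀ i j, 1 ≤ i → i ≤ j → j ≤ r → a i j ≤ a (i - 1) (j - 1) ∧ a (i - 1) j ≤ a i j)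
    (hstrict : ∀ i j, i ≤ j → j < r → a i (j + 1) < a i j)
    (hV : ∀ i c, i ≤ r → c ≤ N → (V i c = false ↔ ∃ j, i ≤ j ∧ j ≤ r ∧ c = a i j))
    (hVbot : ∀ c, c ≤ N → V (r + 1) c = true)
    (hHr : ∀ i, i ≤ r → H i 0 = false)
    (hadm : ∀ i c, i ≤ r → c ≤ N → Adm (V i c) (V (i + 1) c) (H i (c + 1)) (H i c))
    {i : ℕ} (hir : i ≤ r) :
    (∏ c ∈ Finset.range (N + 1),
      (if V (i + 1) c = false then
        (if V i c = false then (if H i c = true then g (chargeGamma H i c) else 1)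
         else h (chargeGamma H i c))
       else 1)) =
    ∏ j ∈ Finset.Icc (i + 1) r,
      (if a (i + 1) j = a i (j - 1) then g (bGamma r a (i + 1) j)
       else if a (i + 1) j = a i j then (1 : K)
       else h (bGamma r a (i + 1) j)) := by
  have himg : (Finset.Icc (i + 1) r).image (fun j => a (i + 1) j) ⊆ Finset.range (N + 1) := by
    intro c hc
    obtain ⟨j, hj, rfl⟩ := Finset.mem_image.1 hc
    simp only [Finset.mem_Icc] at hj
    simp only [Finset.mem_range]
    have := bound_le_N hN hinter hstrict (i + 1) j hj.1 hj.2
    omega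
  rw [← Finset.prod_subset himg ?van]
  case van =>
    intro c hc hnc
    simp only [Finset.mem_range] at hc
    have hVt : V (i + 1) c = true := by
      rcases Nat.lt_or_ge i r with hi | hi
      · cases hvc : V (i + 1) c
        · exfalso
          obtain ⟨j, h1, h2, h3⟩ := (hV (i + 1) c (by omega) (by omega)).1 hvc
          exact hnc (Finset.mem_image.2 ⟨j, Finset.mem_Icc.2 ⟨h1, h2⟩, h3.symm⟩)
        · rfl
      · rw [show i = r by omega]
        exact hVbot c (by omega)
    simp [hVt]
  rw [Finset.prod_image ?inj]
  case inj =>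
    intro j1 hj1 j2 hj2 hEq
    simp only [Finset.mem_coe, Finset.mem_Icc] at hj1 hj2 hEq
    by_contra hne
    rcases Nat.lt_or_ge j1 j2 with hlt | hge
    · have := anti_strict hstrict hj1.1 hlt hj2.2; omega
    · have := anti_strict hstrict hj2.1 (by omega) hj1.2; omega
  apply Finset.prod_congr rfl
  intro j hj
  simp only [Finset.mem_Icc] at hj
  obtain ⟨hij, hjr⟩ := hj
  have hcN : a (i + 1) j ≤ N := bound_le_N hN hinter hstrict (i + 1) j hij hjr
  have hVb : V (i + 1) (a (i + 1) j) = false := by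
    rcases Nat.lt_or_ge i r with hi | hi
    · exact (hV (i + 1) (a (i + 1) j) (by omega) hcN).2 ⟨j, hij, hjr, rfl⟩
    · omega
  have hTj : a i j ≤ a (i + 1) j := by
    have := (hinter (i + 1) j (by omega) hij hjr).2
    simpa using this
  have hTj1 : a (i + 1) j ≤ a i (j - 1) := by
    have := (hinter (i + 1) j (by omega) hij hjr).1
    simpa using this
  have hq : pcount r a (i + 1) (a (i + 1) j) = r - j := by
    apply pc_filter_eq hij hjr
    · intro l hl hlr; exact anti_strict hstrict hij (by omega) hlr
    · intro l hl hlj; exact anti_le hstrict hl hlj hjr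
  have hH := Hform hinter hstrict hV hVbot hHr hadm i (a (i + 1) j) hir (by omega)
  by_cases h1 : a (i + 1) j = a i j
  · have hVt : V i (a (i + 1) j) = false :=
      (hV i (a (i + 1) j) hir hcN).2 ⟨j, by omega, hjr, h1⟩
    have hp : pcount r a i (a (i + 1) j) = r - j := by
      apply pc_filter_eq (show i ≤ j by omega) hjr
      · intro l hl hlr
        calc a i l < a i j := anti_strict hstrict (by omega) (by omega) hlr
          _ ≤ a (i + 1) j := by omega
      · intro l hl hlj
        rw [h1]; exact anti_le hstrict hl hlj hjr
    have hHf : H i (a (i + 1) j) = false := by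
      rw [hH, hp, hq]; simp
    have hne : a (i + 1) j ≠ a i (j - 1) := by
      have : a i j < a i (j - 1) := anti_strict hstrict (by omega) (by omega) hjr
      omega
    rw [if_pos hVb, if_pos hVt, if_neg (by simp [hHf]), if_neg hne, if_pos h1]
  · by_cases h2 : a (i + 1) j = a i (j - 1)
    · have hVt : V i (a (i + 1) j) = false :=
        (hV i (a (i + 1) j) hir hcN).2 ⟨j - 1, by omega, by omega, h2⟩
      have hTjlt : a i j < a (i + 1) j := by omega
      have hp : pcount r a i (a (i + 1) j) = r + 1 - j := by
        apply pc_filter_eq' (show i ≤ j by omega) hjr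
        · intro l hl hlr
          calc a i l ≤ a i j := anti_le hstrict (by omega) hl hlr
            _ < a (i + 1) j := hTjlt
        · intro l hl hlj
          calc a (i + 1) j ≤ a i (j - 1) := hTj1
            _ ≤ a i l := anti_le hstrict hl (by omega) (by omega)
      have hHt : H i (a (i + 1) j) = true := by
        rw [hH, hp, hq]; simp; omega
      rw [if_pos hVb, if_pos hVt, if_pos hHt, if_pos h2,
        charge_eq hN hinter hstrict hV hVbot hHr hadm hij hjr]
    · have hVt : V i (a (i + 1) j) = true := by
        cases hvc : V i (a (i + 1) j)
        · exfalso
          obtain ⟨l, hil, hlr, hcl⟩ := (hV i (a (i + 1) j) hir hcN).1 hvc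
          have hlj : l ≤ j := by
            by_contra hcon
            have := anti_strict hstrict (show i ≤ j by omega) (show j < l by omega) hlr
            omega
          have hjl : j - 1 ≤ l := by
            by_contra hcon
            have := anti_strict hstrict hil (show l < j - 1 by omega) (show j - 1 ≤ r by omega)
            omega
          rcases Nat.lt_or_ge l j with hx | hx
          · apply h2; rw [hcl]; congr 1; omega
          · apply h1; rw [hcl]; congr 1; omega
        · rfl
      rw [if_pos hVb, if_neg (by simp [hVt]), if_neg h2, if_neg h1,
        charge_eq hN hinter hstrict hV hVbot hHr hadm hij hjr]

lemma wt_col (g h : ℕ → K) (zi : K)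
    (hadm : ∀ i c, i ≤ r → c ≤ N → Adm (V i c) (V (i + 1) c) (H i (c + 1)) (H i c))
    {i c : ℕ} (hir : i ≤ r) (hc : c ≤ N) :
    wtGamma g h zi (chargeGamma H i c) (V i c) (V (i + 1) c) (H i (c + 1)) (H i c)
    = (if V (i + 1) c = false then
        (if V i c = false then (if H i c = true then g (chargeGamma H i c) else 1)
         else h (chargeGamma H i c))
       else 1)
      * zi ^ (if H i (c + 1) = true then 0 else 1) := by
  rcases hadm i c hir hc with h6 | h6 | h6 | h6 | h6 | h6 <;>
  · simp only [Prod.mk.injEq] at h6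
    obtain ⟨e1, e2, e3, e4⟩ := h6
    rw [e1, e2, e3, e4]
    simp [wtGamma]

lemma row_prod (g h : ℕ → K) (zi : K) (hN : N = a 0 0)
    (hinter : ∀ i j, 1 ≤ i → i ≤ j → j ≤ r → a i j ≤ a (i - 1) (j - 1) ∧ a (i - 1) j ≤ a i j)
    (hstrict : ∀ i j, i ≤ j → j < r → a i (j + 1) < a i j)
    (hV : ∀ i c, i ≤ r → c ≤ N → (V i c = false ↔ ∃ j, i ≤ j ∧ j ≤ r ∧ c = a i j))
    (hVbot : ∀ c, c ≤ N → V (r + 1) c = true)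
    (hHr : ∀ i, i ≤ r → H i 0 = false)
    (hadm : ∀ i c, i ≤ r → c ≤ N → Adm (V i c) (V (i + 1) c) (H i (c + 1)) (H i c))
    {i : ℕ} (hir : i ≤ r) :
    (∏ c ∈ Finset.range (N + 1),
        wtGamma g h zi (chargeGamma H i c) (V i c) (V (i + 1) c) (H i (c + 1)) (H i c))
    = (∏ j ∈ Finset.Icc (i + 1) r,
        (if a (i + 1) j = a i (j - 1) then g (bGamma r a (i + 1) j)
         else if a (i + 1) j = a i j then (1 : K)
         else h (bGamma r a (i + 1) j)))
      * zi ^ (rowSum r a i - rowSum r a (i + 1)) := by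
  rw [Finset.prod_congr rfl (fun c hc =>
    wt_col g h zi hadm hir (Nat.lt_succ_iff.mp (Finset.mem_range.1 hc)))]
  rw [Finset.prod_mul_distrib]
  rw [uprod g h hN hinter hstrict hV hVbot hHr hadm hir]
  congr 1
  rw [Finset.prod_pow_eq_pow_sum]
  congr 1
  rw [← exponent hN hinter hstrict hV hVbot hHr hadm hir]
  rw [Finset.card_filter]
  apply Finset.sum_congr rfl
  intro c _
  cases hx : H i (c + 1) <;> simp

end Aux

end Stmt4Aux

/-- For a strict Gelfand-Tsetlin pattern `T` of rank `r` corresponding under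
the bijection to a state `S` of Gamma ice, the product of Boltzmann weights over all
vertices of `S` equals
`G^Γ(T) · z_{r+1}^{d_0−d_1} · z_r^{d_1−d_2} ⋯ z_2^{d_{r−1}−d_r} · z_1^{d_r}`.
Rows of ice are numbered `r+1` down to `1` from top to bottom (the ice row with 0-based
index `i` from the top has spectral parameter `z_{r+1−i}`). -/
theorem stmt_4 {K : Type*} [CommRing K] (g h : ℕ → K) (z : ℕ → K)
    (r N : ℕ) (a : ℕ → ℕ → ℕ) (hN : N = a 0 0)
    (hinter : ∀ i j, 1 ≤ i → i ≤ j → j ≤ r → a i j ≤ a (i - 1) (j - 1) ∧ a (i - 1) j ≤ a i j)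
    (hstrict : ∀ i j, i ≤ j → j < r → a i (j + 1) < a i j)
    (V H : ℕ → ℕ → Bool)
    (hV : ∀ i c, i ≤ r → c ≤ N → (V i c = false ↔ ∃ j, i ≤ j ∧ j ≤ r ∧ c = a i j))
    (hVbot : ∀ c, c ≤ N → V (r + 1) c = true)
    (hHr : ∀ i, i ≤ r → H i 0 = false)
    (hHl : ∀ i, i ≤ r → H i (N + 1) = true)
    (hadm : ∀ i c, i ≤ r → c ≤ N → Adm (V i c) (V (i + 1) c) (H i (c + 1)) (H i c)) :
    (∏ i ∈ Finset.range (r + 1), ∏ c ∈ Finset.range (N + 1),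
        wtGamma g h (z (r + 1 - i)) (chargeGamma H i c)
          (V i c) (V (i + 1) c) (H i (c + 1)) (H i c))
      = GGamma g h r a *
        ∏ i ∈ Finset.range (r + 1), z (r + 1 - i) ^ (rowSum r a i - rowSum r a (i + 1)) := by
  have hrow : ∀ i ∈ Finset.range (r + 1),
      (∏ c ∈ Finset.range (N + 1),
        wtGamma g h (z (r + 1 - i)) (chargeGamma H i c)
          (V i c) (V (i + 1) c) (H i (c + 1)) (H i c))
      = (∏ j ∈ Finset.Icc (i + 1) r,
          (if a (i + 1) j = a i (j - 1) then g (bGamma r a (i + 1) j)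
           else if a (i + 1) j = a i j then (1 : K)
           else h (bGamma r a (i + 1) j)))
        * z (r + 1 - i) ^ (rowSum r a i - rowSum r a (i + 1)) := by
    intro i hi
    exact Stmt4Aux.row_prod g h (z (r + 1 - i)) hN hinter hstrict hV hVbot hHr hadm
      (Nat.lt_succ_iff.mp (Finset.mem_range.1 hi))
  rw [Finset.prod_congr rfl hrow, Finset.prod_mul_distrib]
  congr 1
  -- reindex the Gauss-sum product
  have hstep : ∀ i : ℕ, (∏ j ∈ Finset.Icc (i + 1) r,
      (if a (i + 1) j = a i (j - 1) then g (bGamma r a (i + 1) j)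
       else if a (i + 1) j = a i j then (1 : K)
       else h (bGamma r a (i + 1) j)))
      = ∏ j ∈ Finset.Icc (i + 1) r,
      (if a (i + 1) j = a (i + 1 - 1) (j - 1) then g (bGamma r a (i + 1) j)
       else if a (i + 1) j = a (i + 1 - 1) j then (1 : K)
       else h (bGamma r a (i + 1) j)) := by
    intro i
    simp only [Nat.add_sub_cancel]
  rw [Finset.prod_congr rfl (fun i _ => hstep i)]
  have hre : (∏ i ∈ Finset.range (r + 1), ∏ j ∈ Finset.Icc (i + 1) r,
      (if a (i + 1) j = a (i + 1 - 1) (j - 1) then g (bGamma r a (i + 1) j)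
       else if a (i + 1) j = a (i + 1 - 1) j then (1 : K)
       else h (bGamma r a (i + 1) j)))
      = ∏ i ∈ Finset.Icc 1 (r + 1), ∏ j ∈ Finset.Icc i r,
      (if a i j = a (i - 1) (j - 1) then g (bGamma r a i j)
       else if a i j = a (i - 1) j then (1 : K)
       else h (bGamma r a i j)) := by
    rw [← Finset.Ico_add_one_right_eq_Icc, Finset.prod_Ico_eq_prod_range]
    simp only [show r + 1 + 1 - 1 = r + 1 from rfl]
    apply Finset.prod_congr rfl
    intro i _
    rw [Nat.add_comm 1 i]
  rw [hre]
  rw [← Finset.Ico_add_one_right_eq_Icc, Finset.prod_Ico_succ_top (by omega : 1 ≤ r + 1)]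
  have hempty : Finset.Icc (r + 1) r = ∅ := Finset.Icc_eq_empty (by omega)
  rw [hempty]
  simp [GGamma, Finset.Ico_add_one_right_eq_Icc]
end
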